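/- Let ν₀ ≥ 1 be an integer and ρ > 0, opt > 0 reals. Suppose c₁, …, c_ℓ ≥ 0 and ν₀ > ν₁ > … > ν_ℓ = 0 are such that for each i, c_i/(ν_{i−1} − ν_i) ≤ ρ · opt/ν_{i−1}, and moreover c_ℓ ≤ α · opt for some α > 0. Then Σ_{i=1}^{ℓ} c_i ≤ (α + ρ ln ν₀) · opt. -/

import Mathlib

theorem stmt_13 (ℓ : ℕ) (hℓ : 1 ≤ ℓ) (ν : ℕ → ℕ) (c : ℕ → ℝ)
    (ρ opt α : ℝ) (hρ : 0 < ρ) (hopt : 0 < opt) (hα : 0 < α)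
    (hν₀ : 1 ≤ ν 0) (hνℓ : ν ℓ = 0)
    (hdec : ∀ i < ℓ, ν (i + 1) < ν i)
    (hc : ∀ i ∈ Finset.Icc 1 ℓ, 0 ≤ c i)
    (hdens : ∀ i ∈ Finset.Icc 1 ℓ,
      c i / ((ν (i - 1) : ℝ) - ν i) ≤ ρ * opt / (ν (i - 1) : ℝ))
    (hlast : c ℓ ≤ α * opt) :
    ∑ i ∈ Finset.Icc 1 ℓ, c i ≤ (α + ρ * Real.log (ν 0)) * opt := by
  obtain ⟨m, rfl⟩ : ∃ m, ℓ = m + 1 := ⟨ℓ - 1, (Nat.succ_pred_eq_of_pos hℓ).symm⟩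
  have hν1 : ∀ i ≤ m, (1:ℝ) ≤ (ν i : ℝ) := by
    intro i hi
    have := hdec i (Nat.lt_succ_of_le hi)
    exact_mod_cast Nat.one_le_iff_ne_zero.mpr (by omega)
  have key : ∀ j < m, c (j+1) ≤ ρ * opt * (Real.log (ν j) - Real.log (ν (j+1))) := by
    intro j hj
    have hj1 : (1:ℝ) ≤ (ν j : ℝ) := hν1 j (le_of_lt hj)
    have hj2 : (1:ℝ) ≤ (ν (j+1) : ℝ) := hν1 (j+1) hj
    have hdj : ν (j+1) < ν j := hdec j (by omega)
    have hd : (0:ℝ) < (ν j : ℝ) - (ν (j+1) : ℝ) := by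
      have : (ν (j+1) : ℝ) < (ν j : ℝ) := by exact_mod_cast hdj
      linarith
    have hpos : (0:ℝ) < (ν j : ℝ) := by linarith
    have h1 := hdens (j+1) (by simp [Finset.mem_Icc]; omega)
    simp only [Nat.add_sub_cancel] at h1
    rw [div_le_div_iff₀ hd hpos] at h1
    have h2 : c (j+1) ≤ ρ * opt * (((ν j : ℝ) - (ν (j+1) : ℝ)) / ν j) := by
      rw [← mul_div_assoc, le_div_iff₀ hpos]
      nlinarith
    have h3 : ((ν j : ℝ) - (ν (j+1) : ℝ)) / ν j
        ≤ Real.log (ν j) - Real.log (ν (j+1)) := by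
      have hlog := Real.log_le_sub_one_of_pos
        (x := (ν (j+1) : ℝ) / (ν j : ℝ)) (by positivity)
      rw [Real.log_div (by linarith) (by linarith)] at hlog
      have heq : ((ν j : ℝ) - (ν (j+1) : ℝ)) / ν j = 1 - (ν (j+1) : ℝ) / ν j := by
        field_simp
      rw [heq]; linarith
    calc c (j+1) ≤ ρ * opt * (((ν j : ℝ) - (ν (j+1) : ℝ)) / ν j) := h2
      _ ≤ ρ * opt * (Real.log (ν j) - Real.log (ν (j+1))) :=
          mul_le_mul_of_nonneg_left h3 (by positivity)
  have hsum : ∑ i ∈ Finset.Icc 1 (m+1), c i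
      = ∑ j ∈ Finset.range m, c (j+1) + c (m+1) := by
    rw [show Finset.Icc 1 (m+1)
        = Finset.map ⟨fun j => j+1, fun a b h => by simp only [] at h; omega⟩ (Finset.range (m+1)) from ?_]
    · rw [Finset.sum_map]; simp [Finset.sum_range_succ]; rfl
    · ext x; simp only [Finset.mem_Icc, Finset.mem_map, Finset.mem_range, Function.Embedding.coeFn_mk]; constructor
      · rintro ⟨h1, h2⟩; exact ⟨x - 1, by omega, by show x - 1 + 1 = x; omega⟩
      · rintro ⟨a, ha, rfl⟩; show 1 ≤ a + 1 ∧ a + 1 ≤ m + 1; omega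
  rw [hsum]
  have hT : ∑ j ∈ Finset.range m, c (j+1) ≤ ρ * opt * Real.log (ν 0) := by
    calc ∑ j ∈ Finset.range m, c (j+1)
        ≤ ∑ j ∈ Finset.range m, ρ * opt * (Real.log (ν j) - Real.log (ν (j+1))) :=
          Finset.sum_le_sum fun j hj => key j (Finset.mem_range.mp hj)
      _ = ρ * opt * (Real.log (ν 0) - Real.log (ν m)) := by
          rw [← Finset.mul_sum, Finset.sum_range_sub' (fun j => Real.log (ν j))]
      _ ≤ ρ * opt * Real.log (ν 0) := by
          have h0 : 0 ≤ Real.log (ν m) := Real.log_nonneg (hν1 m le_rfl)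
          nlinarith [mul_pos hρ hopt]
  have : (α + ρ * Real.log (ν 0)) * opt = α * opt + ρ * opt * Real.log (ν 0) := by ring
  linarith
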